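/- Let a, b, c ∈ ℂ with a ≠ 0 and b/a ∉ ℚ, and let k ∈ ℕ with k ≥ 1. Then there do not exist polynomials P, Q ∈ ℂ[u, v] in two variables such that the function t ↦ Q(e^{-a·t}, exp(c·e^{-a·t})) is not identically zero on ℝ and e^{-k·b·t}·Q(e^{-a·t}, exp(c·e^{-a·t})) = P(e^{-a·t}, exp(c·e^{-a·t})) for all t ∈ ℝ. In other words, the function t ↦ e^{-k·b·t} does not belong to the field ℂ(e^{-a·t}, exp(c·e^{-a·t})) of rational expressions in e^{-a·t} and exp(c·e^{-a·t}). -/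

import Mathlib

open Complex

set_option maxHeartbeats 1000000 in
private lemma diff_eval_aux (g₁ g₂ : ℂ → ℂ) (hg₁ : Differentiable ℂ g₁)
    (hg₂ : Differentiable ℂ g₂) (R : MvPolynomial (Fin 2) ℂ) :
    Differentiable ℂ (fun z => MvPolynomial.eval ![g₁ z, g₂ z] R) := by
  induction R using MvPolynomial.induction_on with
  | C r => simp only [MvPolynomial.eval_C]; exact differentiable_const r
  | add p q hp hq => simpa using hp.fun_add hq
  | mul_X p i hp =>
      have hi : Differentiable ℂ (fun z => ![g₁ z, g₂ z] i) := by
        fin_cases i <;> simpa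
      simpa using hp.fun_mul hi

set_option maxHeartbeats 1000000 in
/-- Lemma 4.1: when `b/a ∉ ℚ`, the exponential `e^{-k b t}` does not lie in
the field `ℂ(e^{-a t}, exp(c·e^{-a t}))`, i.e. it cannot be written as a ratio
of polynomial expressions in `e^{-a t}` and `exp(c·e^{-a t})`. -/
theorem exp_kbt_not_in_field (a b c : ℂ) (ha : a ≠ 0)
    (hba : ∀ q : ℚ, (q : ℂ) ≠ b / a) (k : ℕ) (hk : 1 ≤ k) :
    ¬ ∃ P Q : MvPolynomial (Fin 2) ℂ,
      (∃ t : ℝ, MvPolynomial.eval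
          ![Complex.exp (-a * t), Complex.exp (c * Complex.exp (-a * t))] Q ≠ 0) ∧
      ∀ t : ℝ,
        Complex.exp (-(k : ℂ) * b * t) *
          MvPolynomial.eval
            ![Complex.exp (-a * t), Complex.exp (c * Complex.exp (-a * t))] Q =
        MvPolynomial.eval
          ![Complex.exp (-a * t), Complex.exp (c * Complex.exp (-a * t))] P := by
  rintro ⟨P, Q, ⟨t₀, hQ⟩, heq⟩
  -- the evaluation maps, as entire functions of a complex variable
  set ev : MvPolynomial (Fin 2) ℂ → ℂ → ℂ := fun R z =>
    MvPolynomial.eval ![Complex.exp (-a * z), Complex.exp (c * Complex.exp (-a * z))] R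
    with hev
  set f : ℂ → ℂ := fun z => Complex.exp (-(k : ℂ) * b * z) * ev Q z - ev P z with hf
  -- f is entire
  have hx : Differentiable ℂ (fun z : ℂ => Complex.exp (-a * z)) :=
    (differentiable_id.const_mul (-a)).cexp
  have hy : Differentiable ℂ (fun z : ℂ => Complex.exp (c * Complex.exp (-a * z))) :=
    (hx.const_mul c).cexp
  have hdiff : Differentiable ℂ f := by
    refine Differentiable.sub (Differentiable.mul ?_ ?_) ?_
    · exact (differentiable_id.const_mul (-(k : ℂ) * b)).cexp
    · exact diff_eval_aux _ _ hx hy Q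
    · exact diff_eval_aux _ _ hx hy P
  -- f vanishes at real points
  have hreal : ∀ t : ℝ, f (t : ℂ) = 0 := by
    intro t
    simp only [hf, hev]
    rw [sub_eq_zero]
    exact heq t
  -- identity theorem: f vanishes everywhere
  have hanal : AnalyticOnNhd ℂ f Set.univ :=
    Complex.analyticOnNhd_univ_iff_differentiable.mpr hdiff
  have htend : Filter.Tendsto (fun n : ℕ => Complex.ofReal (((n : ℝ) + 1)⁻¹)) Filter.atTop
      (nhdsWithin (0 : ℂ) {(0 : ℂ)}ᶜ) := by
    apply tendsto_nhdsWithin_of_tendsto_nhds_of_eventually_within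
    · have : Filter.Tendsto (fun n : ℕ => ((n : ℝ) + 1)⁻¹) Filter.atTop (nhds 0) :=
        tendsto_one_div_add_atTop_nhds_zero_nat.congr (by intro n; rw [one_div])
      have := (Complex.continuous_ofReal.tendsto 0).comp this
      simpa [Function.comp_def] using this
    · refine Filter.Eventually.of_forall fun n => ?_
      simp only [Set.mem_compl_iff, Set.mem_singleton_iff]
      intro h
      have : ((n : ℝ) + 1)⁻¹ = (0 : ℝ) := by exact_mod_cast h
      have hpos : (0 : ℝ) < ((n : ℝ) + 1)⁻¹ := by positivity
      rw [this] at hpos; exact lt_irrefl 0 hpos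
  have hfreq : ∃ᶠ z in nhdsWithin (0 : ℂ) {(0 : ℂ)}ᶜ, f z = 0 :=
    htend.frequently (Filter.Frequently.of_forall fun n => hreal _)
  have hall : ∀ z : ℂ, f z = 0 := fun z =>
    hanal.eqOn_zero_of_preconnected_of_frequently_eq_zero isPreconnected_univ
      (Set.mem_univ 0) hfreq (Set.mem_univ z)
  -- evaluate at the shifted point s = t₀ + 2πi/a
  set s : ℂ := (t₀ : ℂ) + 2 * Real.pi * I / a with hs
  have hxs : Complex.exp (-a * s) = Complex.exp (-a * (t₀ : ℂ)) := by
    have : -a * s = -a * (t₀ : ℂ) + -(2 * Real.pi * I) := by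
      rw [hs]; field_simp; ring
    rw [this, Complex.exp_add, Complex.exp_neg, Complex.exp_two_pi_mul_I, inv_one, mul_one]
  have hevQ : ev Q s = ev Q (t₀ : ℂ) := by simp only [hev, hxs]
  have hevP : ev P s = ev P (t₀ : ℂ) := by simp only [hev, hxs]
  have h1 : Complex.exp (-(k : ℂ) * b * s) * ev Q (t₀ : ℂ) = ev P (t₀ : ℂ) := by
    have := hall s
    rw [hf] at this
    rw [← hevQ, ← hevP, ← sub_eq_zero]
    exact this
  have h2 : Complex.exp (-(k : ℂ) * b * (t₀ : ℂ)) * ev Q (t₀ : ℂ) = ev P (t₀ : ℂ) :=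
    heq t₀
  have hQ' : ev Q (t₀ : ℂ) ≠ 0 := hQ
  have hexp : Complex.exp (-(k : ℂ) * b * s) = Complex.exp (-(k : ℂ) * b * (t₀ : ℂ)) :=
    mul_right_cancel₀ hQ' (h1.trans h2.symm)
  have hone : Complex.exp (-(k : ℂ) * b * s - -(k : ℂ) * b * (t₀ : ℂ)) = 1 := by
    rw [Complex.exp_sub, hexp, div_self (Complex.exp_ne_zero _)]
  rw [Complex.exp_eq_one_iff] at hone
  obtain ⟨n, hn⟩ := hone
  -- derive b/a ∈ ℚ, contradiction
  have hk0 : (k : ℂ) ≠ 0 := Nat.cast_ne_zero.mpr (by omega)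
  have hpi : (2 * (Real.pi : ℂ) * I) ≠ 0 := by
    simp [Real.pi_ne_zero, Complex.I_ne_zero]
  have key : -(k : ℂ) * b / a = (n : ℂ) := by
    have hlhs : -(k : ℂ) * b * s - -(k : ℂ) * b * (t₀ : ℂ)
        = (-(k : ℂ) * b / a) * (2 * Real.pi * I) := by
      rw [hs]; field_simp; ring
    rw [hlhs] at hn
    exact mul_right_cancel₀ hpi hn
  apply hba (-(n : ℚ) / (k : ℚ))
  have : b / a = -(n : ℂ) / (k : ℂ) := by
    have : -(k : ℂ) * (b / a) = (n : ℂ) := by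
      rw [← key]; ring
    field_simp at this ⊢
    linear_combination -this
  rw [this]
  push_cast
  ring
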